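/- Let C11, C12, C21, C22 be n×n complex matrices. The conditions (BC-CC): C12·C11* = C11·C12*, C21·C22* = C22·C21*, and C11·C22* − C12·C21* = I_n, hold if and only if the conditions (BC-CC2): C11*·C21 = C21*·C11, C12*·C22 = C22*·C12, and C11*·C22 − C21*·C12 = I_n, hold. -/
import Mathlib


open Matrix

private lemma J_mul_J {n : ℕ} :
    (fromBlocks 0 1 (-1) 0 : Matrix (Fin n ⊕ Fin n) (Fin n ⊕ Fin n) ℂ) *
      fromBlocks 0 1 (-1) 0 = -1 := by
  simp [fromBlocks_multiply, ← fromBlocks_one, fromBlocks_neg]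

private lemma key_aux {n : ℕ} (M : Matrix (Fin n ⊕ Fin n) (Fin n ⊕ Fin n) ℂ)
    (h : M * fromBlocks 0 1 (-1) 0 * Mᴴ = fromBlocks 0 1 (-1) 0) :
    Mᴴ * fromBlocks 0 1 (-1) 0 * M = fromBlocks 0 1 (-1) 0 := by
  set J : Matrix (Fin n ⊕ Fin n) (Fin n ⊕ Fin n) ℂ := fromBlocks 0 1 (-1) 0 with hJ
  have hJJ : J * J = -1 := J_mul_J
  have h1 : M * (J * Mᴴ * -J) = 1 := by
    calc M * (J * Mᴴ * -J) = M * J * Mᴴ * -J := by noncomm_ring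
    _ = J * -J := by rw [h]
    _ = 1 := by rw [mul_neg, hJJ, neg_neg]
  have h2 : J * (Mᴴ * -J * M) = 1 := by
    have := mul_eq_one_comm.mp h1
    calc J * (Mᴴ * -J * M) = J * Mᴴ * -J * M := by noncomm_ring
    _ = 1 := this
  have h3 : Mᴴ * -J * M = -J := by
    have : (-J) * (J * (Mᴴ * -J * M)) = -J * 1 := by rw [h2]
    rwa [← mul_assoc, neg_mul, hJJ, neg_neg, one_mul, mul_one] at this
  have : -(Mᴴ * J * M) = -J := by
    calc -(Mᴴ * J * M) = Mᴴ * -J * M := by noncomm_ring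
    _ = -J := h3
  exact neg_injective this

/-- The self-adjointness conditions (BC-CC) on the blocks of a transfer matrix
are equivalent to the conditions (BC-CC2). -/
theorem bc_cc_iff_bc_cc2 {n : ℕ} (C11 C12 C21 C22 : Matrix (Fin n) (Fin n) ℂ) :
    (C12 * C11ᴴ = C11 * C12ᴴ ∧ C21 * C22ᴴ = C22 * C21ᴴ ∧
      C11 * C22ᴴ - C12 * C21ᴴ = 1) ↔
    (C11ᴴ * C21 = C21ᴴ * C11 ∧ C12ᴴ * C22 = C22ᴴ * C12 ∧
      C11ᴴ * C22 - C21ᴴ * C12 = 1) := by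
  set M : Matrix (Fin n ⊕ Fin n) (Fin n ⊕ Fin n) ℂ := fromBlocks C11 C12 C21 C22 with hM
  set J : Matrix (Fin n ⊕ Fin n) (Fin n ⊕ Fin n) ℂ := fromBlocks 0 1 (-1) 0 with hJ
  have hMJMH : M * J * Mᴴ =
      fromBlocks (-(C12 * C11ᴴ) + C11 * C12ᴴ) (-(C12 * C21ᴴ) + C11 * C22ᴴ)
        (-(C22 * C11ᴴ) + C21 * C12ᴴ) (-(C22 * C21ᴴ) + C21 * C22ᴴ) := by
    rw [hM, hJ, fromBlocks_conjTranspose, fromBlocks_multiply, fromBlocks_multiply]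
    congr 1 <;> first | (congr 1 <;> noncomm_ring) | noncomm_ring
  have hMHJM : Mᴴ * J * M =
      fromBlocks (-(C21ᴴ * C11) + C11ᴴ * C21) (-(C21ᴴ * C12) + C11ᴴ * C22)
        (-(C22ᴴ * C11) + C12ᴴ * C21) (-(C22ᴴ * C12) + C12ᴴ * C22) := by
    rw [hM, hJ, fromBlocks_conjTranspose, fromBlocks_multiply, fromBlocks_multiply]
    congr 1 <;> first | (congr 1 <;> noncomm_ring) | noncomm_ring
  constructor
  · rintro ⟨h1, h2, h3⟩
    have hfwd : M * J * Mᴴ = J := by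
      rw [hMJMH, hJ, fromBlocks_inj]
      refine ⟨by rw [h1]; abel, by rw [← h3]; abel, ?_, by rw [h2]; abel⟩
      have h3' : C22 * C11ᴴ - C21 * C12ᴴ = 1 := by
        have := congrArg conjTranspose h3
        simpa using this
      rw [← h3']; abel
    have hbwd := key_aux M hfwd
    rw [hMHJM, fromBlocks_inj] at hbwd
    obtain ⟨e1, e2, e3, e4⟩ := hbwd
    refine ⟨by linear_combination (norm := noncomm_ring) e1, ?_, ?_⟩
    · linear_combination (norm := noncomm_ring) e4
    · linear_combination (norm := noncomm_ring) e2
  · rintro ⟨h1, h2, h3⟩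
    have hfwd : Mᴴ * J * M = J := by
      rw [hMHJM, hJ, fromBlocks_inj]
      refine ⟨by rw [h1]; abel, by rw [← h3]; abel, ?_, by rw [h2]; abel⟩
      have h3' : C22ᴴ * C11 - C12ᴴ * C21 = 1 := by
        have := congrArg conjTranspose h3
        simpa using this
      rw [← h3']; abel
    have hbwd := key_aux Mᴴ (by simpa using hfwd)
    rw [conjTranspose_conjTranspose, hMJMH, fromBlocks_inj] at hbwd
    obtain ⟨e1, e2, e3, e4⟩ := hbwd
    refine ⟨by linear_combination (norm := noncomm_ring) -e1, ?_, ?_⟩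
    · linear_combination (norm := noncomm_ring) e4
    · linear_combination (norm := noncomm_ring) e2
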